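/- arXiv:2106.04039 — 2 statements merged into one kernel-verified Lean document; each statement's English description precedes it below -/
import Mathlib

section
/- An infinite-dimensional complex Hilbert space has no orthonormal Hamel basis: if H is a complex inner product space that is complete and not finite dimensional over ℂ, then there is no algebraic basis b : Basis ι ℂ H of H whose family of vectors is orthonormal. -/
open scoped ComplexInnerProductSpace

theorem stmt_14 (H : Type*) [NormedAddCommGroup H] [InnerProductSpace ℂ H]
    [CompleteSpace H] (h : ¬ FiniteDimensional ℂ H)
    (ι : Type*) (b : Module.Basis ι ℂ H) :
    ¬ Orthonormal ℂ (fun i => b i) := by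
  intro hb
  have hinf : Infinite ι := by
    by_contra hfin
    rw [not_infinite_iff_finite] at hfin
    have := Fintype.ofFinite ι
    exact h (Module.Finite.of_basis b)
  obtain ⟨f⟩ := Infinite.natEmbedding ι
  rename_i finj
  let e : ℕ → H := fun n => b (f n)
  have he : Orthonormal ℂ e := hb.comp f finj
  -- the series ∑ (1/2)^n • e n converges
  have hsum : Summable (fun n : ℕ => ((1/2 : ℂ) ^ n) • e n) := by
    apply Summable.of_norm
    have : ∀ n : ℕ, ‖((1/2 : ℂ) ^ n) • e n‖ = (1/2 : ℝ) ^ n := by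
      intro n
      rw [norm_smul, he.1 n]
      simp [norm_pow]
    simp only [this]
    exact summable_geometric_of_lt_one (by norm_num) (by norm_num)
  set x : H := ∑' n, ((1/2 : ℂ) ^ n) • e n with hx
  -- inner products with e m
  have hinner : ∀ m : ℕ, ⟪e m, x⟫ = (1/2 : ℂ) ^ m := by
    intro m
    have := (innerSL ℂ (e m)).map_tsum hsum
    rw [hx, show (inner ℂ (e m) (∑' n, ((1/2 : ℂ) ^ n) • e n) : ℂ) = (innerSL ℂ (e m)) (∑' n, ((1/2 : ℂ) ^ n) • e n) from rfl, this]
    have h1 : ∀ n : ℕ, (innerSL ℂ (e m)) (((1/2 : ℂ) ^ n) • e n)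
        = if n = m then (1/2 : ℂ) ^ m else 0 := by
      intro n
      simp only [innerSL_apply_apply, inner_smul_right]
      rcases eq_or_ne n m with rfl | hnm
      · simp [inner_self_eq_norm_sq_to_K, he.1 n]
      · rw [he.2 (fun hh => hnm hh.symm)]
        simp [hnm]
    simp only [h1]
    exact tsum_eq_single m (by intro n hn; simp [hn]) |>.trans (by simp)
  -- but inner with basis vector gives repr coefficient
  have hrepr : ∀ i : ι, ⟪b i, x⟫ = b.repr x i := by
    intro i
    conv_lhs => rw [← b.linearCombination_repr x]
    exact hb.inner_right_finsupp (b.repr x) i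
  have hmem : ∀ n : ℕ, f n ∈ (b.repr x).support := by
    intro n
    rw [Finsupp.mem_support_iff, ← hrepr (f n)]
    have : ⟪b (f n), x⟫ = (1/2 : ℂ) ^ n := hinner n
    rw [this]
    exact pow_ne_zero _ (by norm_num)
  have : Set.range f ⊆ ((b.repr x).support : Set ι) := by
    rintro _ ⟨n, rfl⟩; exact hmem n
  have hinfr : (Set.range f).Infinite := Set.infinite_range_of_injective finj
  exact hinfr ((Set.Finite.subset (Finset.finite_toSet _) this))
end

section
/- Let H be an infinite-dimensional separable complex Hilbert space. Then the Hamel dimension of H over ℂ equals the cardinality of the continuum: Module.rank ℂ H = 𝔠 (and likewise the cardinality of H equals 𝔠). -/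
open Cardinal Set

lemma mk_le_continuum_of_sep (H : Type*) [MetricSpace H]
    [TopologicalSpace.SeparableSpace H] : #H ≤ 𝔠 := by
  obtain ⟨D, Dcount, Ddense⟩ := TopologicalSpace.exists_countable_dense H
  have : ∀ x : H, ∃ u : ℕ → D, Filter.Tendsto (fun n => (u n : H)) Filter.atTop (nhds x) := by
    intro x
    have hx : x ∈ closure D := by rw [Ddense.closure_eq]; trivial
    obtain ⟨u, hu, hlim⟩ := mem_closure_iff_seq_limit.mp hx
    exact ⟨fun n => ⟨u n, hu n⟩, hlim⟩
  choose F hF using this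
  have hFinj : Function.Injective F := by
    intro x y hxy
    exact tendsto_nhds_unique (hF x) (hxy ▸ hF y)
  calc #H ≤ #(ℕ → D) := Cardinal.mk_le_of_injective hFinj
    _ ≤ (ℵ₀ : Cardinal) ^ (ℵ₀ : Cardinal) := by
        rw [Cardinal.mk_arrow]
        have : Countable D := Dcount.to_subtype
        simp only [Cardinal.mk_nat, Cardinal.lift_aleph0, Cardinal.lift_id]
        exact Cardinal.power_le_power_right (by simp [Cardinal.mk_le_aleph0])
    _ = 𝔠 := Cardinal.aleph0_power_aleph0

lemma geom_memℓp (t : ℝ) (ht : t ∈ Set.Ioo (0:ℝ) 1) :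
    Memℓp (fun n : ℕ => (t:ℂ)^n) 2 := by
  apply memℓp_gen
  have h0 : (0:ℝ) ≤ t := ht.1.le
  have : (fun n : ℕ => ‖(t:ℂ)^n‖ ^ (2:ENNReal).toReal) = fun n => (t^2)^n := by
    funext n
    have h1 : ‖(t:ℂ)^n‖ = t^n := by
      rw [norm_pow, Complex.norm_real, Real.norm_eq_abs, abs_of_nonneg h0]
    rw [h1]
    have h2 : ((2:ENNReal)).toReal = ((2:ℕ):ℝ) := by simp
    rw [h2, Real.rpow_natCast]
    ring
  rw [this]
  exact summable_geometric_of_lt_one (by positivity) (by nlinarith [ht.1, ht.2])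

lemma geom_li : LinearIndependent ℂ
    (fun t : Set.Ioo (0:ℝ) 1 => (fun n : ℕ => ((t:ℝ):ℂ)^n)) := by
  have hmh := linearIndependent_monoidHom (Multiplicative ℕ) ℂ
  have hinj : Function.Injective
      (fun t : Set.Ioo (0:ℝ) 1 => (powersHom ℂ ((t:ℝ):ℂ))) := by
    intro a b hab
    have := congrArg (fun f => f (Multiplicative.ofAdd 1)) hab
    simp [powersHom_apply] at this
    exact Subtype.ext (by exact_mod_cast this)
  have h2 := hmh.comp _ hinj
  exact h2

theorem stmt_15 (H : Type*) [NormedAddCommGroup H] [InnerProductSpace ℂ H]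
    [CompleteSpace H] [TopologicalSpace.SeparableSpace H]
    (h : ¬ FiniteDimensional ℂ H) :
    Module.rank ℂ H = Cardinal.continuum ∧ Cardinal.mk H = Cardinal.continuum := by
  -- an infinite orthonormal family
  obtain ⟨w, b, hbw⟩ := exists_hilbertBasis ℂ H
  have hwinf : w.Infinite := by
    by_contra hfin
    rw [Set.not_infinite] at hfin
    have : Fintype w := hfin.fintype
    exact h (Module.Finite.of_basis (b.toOrthonormalBasis.toBasis))
  have : Infinite w := hwinf.to_subtype
  let emb : ℕ ↪ w := Infinite.natEmbedding w
  have he : Orthonormal ℂ (fun n : ℕ => ((emb n : w) : H)) := by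
    have hb : Orthonormal ℂ (fun i : w => (i : H)) := hbw ▸ b.orthonormal
    exact hb.comp emb emb.injective
  -- linear isometry from ℓ² into H
  let V := fun n : ℕ => LinearIsometry.toSpanSingleton ℂ H (he.1 n)
  have hV : OrthogonalFamily ℂ (fun _ : ℕ => ℂ) V := he.orthogonalFamily
  let Φ := hV.linearIsometry
  -- the independent family in ℓ²
  let F : Set.Ioo (0:ℝ) 1 → lp (fun _ : ℕ => ℂ) 2 :=
    fun t => ⟨fun n => ((t:ℝ):ℂ)^n, geom_memℓp t t.2⟩
  -- coercion as linear map
  let L : lp (fun _ : ℕ => ℂ) 2 →ₗ[ℂ] (ℕ → ℂ) :=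
    { toFun := fun f => ⇑f
      map_add' := fun f g => lp.coeFn_add f g
      map_smul' := fun c f => lp.coeFn_smul c f }
  have hFL : LinearIndependent ℂ F := by
    apply LinearIndependent.of_comp L
    exact geom_li
  have hΦF : LinearIndependent ℂ (fun t => Φ (F t)) :=
    hFL.map' Φ.toLinearMap (LinearMap.ker_eq_bot.mpr Φ.injective)
  have h1 : 𝔠 ≤ Module.rank ℂ H := by
    have := hΦF.cardinal_lift_le_rank
    rw [Cardinal.mk_Ioo_real (by norm_num : (0:ℝ) < 1), Cardinal.lift_continuum] at this
    exact Cardinal.lift_le.mp (le_trans (by rw [Cardinal.lift_continuum]) this)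
  have h2 : Module.rank ℂ H ≤ #H := rank_le_card ℂ H
  have h3 : #H ≤ 𝔠 := mk_le_continuum_of_sep H
  exact ⟨le_antisymm (h2.trans h3) h1, le_antisymm h3 (h1.trans h2)⟩
end
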